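/- arXiv:2501.16218 — 2 statements merged into one kernel-verified Lean document; each statement's English description precedes it below -/
import Mathlib

section
/- Let s ∈ (0, 1/2] and R_CE ∈ [0,1], and let Q be a probability measure on [0,1] with ∫ v² dQ(v) ≤ R_CE. Then ∫ C_s((1−v)², (1+v)²) dQ(v) ≤ R_CE · C_s(0, 4), where C_s(λ0,λ1) = s·λ0 + (1−s)·λ1 − λ0^s λ1^{1−s}. Equality holds for the time-sharing measure Q* = R_CE·δ_1 + (1−R_CE)·δ_0. -/
open MeasureTheory

/-- The Chernoff `s`-divergence between Poisson distributions with rates `l0` and `l1`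
(real powers, with the convention `0^s = 0` for `s > 0`). -/
noncomputable def chernoffPoisson (s l0 l1 : ℝ) : ℝ :=
  s * l0 + (1 - s) * l1 - l0 ^ s * l1 ^ (1 - s)

lemma chernoff_prod_eq {s v : ℝ} (hv0 : 0 ≤ 1 - v) (hv1 : 0 ≤ 1 + v) :
    ((1 - v) ^ 2 : ℝ) ^ s * ((1 + v) ^ 2 : ℝ) ^ (1 - s)
      = (1 - v) ^ (2 * s) * (1 + v) ^ (2 - 2 * s) := by
  rw [show ((1 - v) ^ 2 : ℝ) = (1 - v) ^ (2 : ℝ) by rw [Real.rpow_two],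
      show ((1 + v) ^ 2 : ℝ) = (1 + v) ^ (2 : ℝ) by rw [Real.rpow_two],
      ← Real.rpow_mul hv0, ← Real.rpow_mul hv1]
  ring_nf

lemma chernoff_key {s v : ℝ} (hs0 : 0 < s) (hs2 : s ≤ 1 / 2) (hv0 : 0 ≤ v) (hv1 : v ≤ 1) :
    chernoffPoisson s ((1 - v) ^ 2) ((1 + v) ^ 2) ≤ v ^ 2 * (4 * (1 - s)) := by
  have h1v : (0:ℝ) ≤ 1 - v := by linarith
  have h1v' : (0:ℝ) ≤ 1 + v := by linarith
  have hx : (0:ℝ) ≤ 1 + (3 - 4*s) * v := by nlinarith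
  have h2s : (0:ℝ) < 2 - 2*s := by linarith
  -- AM-GM step
  have hw : (1/(2-2*s)) + (1-2*s)/(2-2*s) = 1 := by
    rw [← add_div, div_eq_one_iff_eq (ne_of_gt h2s)]; ring
  have hgm := Real.geom_mean_le_arith_mean2_weighted
    (by positivity : (0:ℝ) ≤ 1/(2-2*s))
    (div_nonneg (by linarith) (by linarith) : (0:ℝ) ≤ (1-2*s)/(2-2*s))
    hx h1v hw
  have hsum : (1/(2-2*s)) * (1 + (3-4*s)*v) + ((1-2*s)/(2-2*s)) * (1-v) = 1 + v := by
    rw [div_mul_eq_mul_div, div_mul_eq_mul_div, ← add_div, div_eq_iff (ne_of_gt h2s)]; ring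
  rw [hsum] at hgm
  -- raise to power 2-2s
  have hbase : (0:ℝ) ≤ (1 + (3-4*s)*v) ^ (1/(2-2*s)) * (1-v) ^ ((1-2*s)/(2-2*s)) := by
    positivity
  have hpow := Real.rpow_le_rpow hbase hgm (le_of_lt h2s)
  rw [Real.mul_rpow (Real.rpow_nonneg hx _) (Real.rpow_nonneg h1v _),
      ← Real.rpow_mul hx, ← Real.rpow_mul h1v,
      show (1/(2-2*s)) * (2-2*s) = 1 from one_div_mul_cancel (ne_of_gt h2s),
      show ((1-2*s)/(2-2*s)) * (2-2*s) = 1-2*s from div_mul_cancel₀ _ (ne_of_gt h2s),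
      Real.rpow_one] at hpow
  -- multiply by (1-v)^(2s)
  have hmul : (1 + (3-4*s)*v) * (1-v)
      ≤ (1-v) ^ (2*s) * (1+v) ^ (2-2*s) := by
    have h := mul_le_mul_of_nonneg_left hpow (Real.rpow_nonneg h1v (2*s))
    calc (1 + (3-4*s)*v) * (1-v)
        = (1 + (3-4*s)*v) * (1-v) ^ ((2*s) + (1-2*s)) := by
          norm_num
      _ = (1-v) ^ (2*s) * ((1 + (3-4*s)*v) * (1-v) ^ (1-2*s)) := by
          rw [Real.rpow_add' h1v (by norm_num)]; ring
      _ ≤ (1-v) ^ (2*s) * (1+v) ^ (2-2*s) := h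
  rw [chernoffPoisson, chernoff_prod_eq h1v h1v']
  nlinarith [hmul]

lemma chernoff_nonneg {s v : ℝ} (hs0 : 0 < s) (hs1 : s ≤ 1) (hv0 : 0 ≤ v) (hv1 : v ≤ 1) :
    0 ≤ chernoffPoisson s ((1 - v) ^ 2) ((1 + v) ^ 2) := by
  have h := Real.geom_mean_le_arith_mean2_weighted (le_of_lt hs0) (by linarith : (0:ℝ) ≤ 1 - s)
    (by positivity : (0:ℝ) ≤ (1-v)^2) (by positivity : (0:ℝ) ≤ (1+v)^2) (by ring)
  rw [chernoffPoisson]; linarith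

lemma chernoff_meas {s : ℝ} (hs0 : 0 < s) (hs1 : s < 1) :
    Measurable (fun v : ℝ => chernoffPoisson s ((1 - v) ^ 2) ((1 + v) ^ 2)) := by
  have hc : ∀ r : ℝ, 0 < r → Continuous fun x : ℝ => x ^ r := fun r hr =>
    continuous_iff_continuousAt.2 fun x => Real.continuousAt_rpow_const x r (Or.inr hr.le)
  unfold chernoffPoisson
  have c1 : Continuous fun v : ℝ => (1 - v) ^ 2 := by continuity
  have c2 : Continuous fun v : ℝ => (1 + v) ^ 2 := by continuity
  exact (((continuous_const.mul c1).add (continuous_const.mul c2)).sub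
    (((hc s hs0).comp c1).mul ((hc (1 - s) (by linarith)).comp c2))).measurable

lemma chernoff_zero_four (s : ℝ) (hs0 : 0 < s) : chernoffPoisson s 0 4 = 4 * (1 - s) := by
  rw [chernoffPoisson, Real.zero_rpow (ne_of_gt hs0)]; ring

/-- For `s ∈ (0,1/2]` and a probability measure `Q` on `[0,1]` with second moment at
most `R_CE`, the expected dark-count-free BPSK Chernoff exponent is at most
`R_CE · C_s(0,4)`, with equality for the time-sharing measure
`Q* = R_CE·δ_1 + (1-R_CE)·δ_0`. -/
theorem time_sharing_exponent_optimal (s RCE : ℝ) (hs : s ∈ Set.Ioc (0 : ℝ) (1 / 2))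
    (hR : RCE ∈ Set.Icc (0 : ℝ) 1) (Q : Measure ℝ) [IsProbabilityMeasure Q]
    (hQsupp : Q (Set.Icc (0 : ℝ) 1)ᶜ = 0)
    (hQE : (∫ v, v ^ 2 ∂Q) ≤ RCE) :
    (∫ v, chernoffPoisson s ((1 - v) ^ 2) ((1 + v) ^ 2) ∂Q) ≤
        RCE * chernoffPoisson s 0 4 ∧
    (∫ v, chernoffPoisson s ((1 - v) ^ 2) ((1 + v) ^ 2)
        ∂(ENNReal.ofReal RCE • Measure.dirac (1 : ℝ) +
          ENNReal.ofReal (1 - RCE) • Measure.dirac (0 : ℝ)))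
      = RCE * chernoffPoisson s 0 4 := by
  obtain ⟨hs0, hs2⟩ := hs
  obtain ⟨hR0, hR1⟩ := hR
  set f : ℝ → ℝ := fun v => chernoffPoisson s ((1 - v) ^ 2) ((1 + v) ^ 2) with hf
  have hfm : Measurable f := chernoff_meas hs0 (by linarith)
  have hae : ∀ᵐ v ∂Q, v ∈ Set.Icc (0:ℝ) 1 := by
    rw [MeasureTheory.ae_iff]
    exact hQsupp
  have hs1 : s ≤ 1 := by linarith
  have hc : (0:ℝ) ≤ 4 * (1 - s) := by linarith
  constructor
  · -- integrability of v^2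
    have hsq : Integrable (fun v : ℝ => v ^ 2) Q := by
      apply (integrable_const (1:ℝ)).mono' (by fun_prop)
      filter_upwards [hae] with v hv
      rw [Real.norm_eq_abs, abs_of_nonneg (by positivity)]
      nlinarith [hv.1, hv.2]
    have hfint : Integrable f Q := by
      apply (integrable_const (4:ℝ)).mono' hfm.aestronglyMeasurable
      filter_upwards [hae] with v hv
      rw [Real.norm_eq_abs, abs_of_nonneg (chernoff_nonneg hs0 hs1 hv.1 hv.2)]
      have := chernoff_key hs0 hs2 hv.1 hv.2
      nlinarith [hv.1, hv.2]
    have hle : (∫ v, f v ∂Q) ≤ ∫ v, v ^ 2 * (4 * (1 - s)) ∂Q := by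
      apply integral_mono_ae hfint (hsq.mul_const _)
      filter_upwards [hae] with v hv
      exact chernoff_key hs0 hs2 hv.1 hv.2
    rw [integral_mul_const] at hle
    rw [chernoff_zero_four s hs0]
    calc (∫ v, f v ∂Q) ≤ (∫ v, v ^ 2 ∂Q) * (4 * (1 - s)) := hle
      _ ≤ RCE * (4 * (1 - s)) := by
          apply mul_le_mul_of_nonneg_right hQE hc
  · -- equality for time-sharing measure
    have hdint : ∀ a : ℝ, Integrable f (Measure.dirac a) := by
      intro a
      refine ⟨hfm.aestronglyMeasurable, ?_⟩
      rw [HasFiniteIntegral, lintegral_dirac]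
      exact ENNReal.coe_lt_top
    rw [integral_add_measure ((hdint 1).smul_measure ENNReal.ofReal_ne_top)
        ((hdint 0).smul_measure ENNReal.ofReal_ne_top),
        integral_smul_measure, integral_smul_measure, integral_dirac, integral_dirac,
        ENNReal.toReal_ofReal hR0, ENNReal.toReal_ofReal (by linarith : (0:ℝ) ≤ 1 - RCE)]
    have h0 : f 0 = 0 := by
      simp only [hf, chernoffPoisson]
      norm_num
    have h1 : f 1 = chernoffPoisson s 0 4 := by
      simp only [hf]
      norm_num
    rw [h0, h1]
    simp
end

section
/- Let r > 0 and let Q be a probability measure on [0,1] with Q({0}) < 1. For v ∈ [0,1], set Λ0(v) := (1−v)² + r and Λ1(v) := (1+v)² + r. Then for every s ∈ (1/2, 1], ∫ C_s(Λ0(v), Λ1(v)) dQ(v) < ∫ C_{1/2}(Λ0(v), Λ1(v)) dQ(v). Consequently, any maximizer over s ∈ [0,1] of s ↦ ∫ C_s(Λ0(v), Λ1(v)) dQ(v) lies in (0, 1/2]. -/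
open MeasureTheory

/-- key log inequality: `2 log t ≤ t - 1/t` for `t ≥ 1`. -/
lemma two_log_le_aux {t : ℝ} (ht : 1 ≤ t) : 2 * Real.log t ≤ t - 1 / t := by
  set f : ℝ → ℝ := fun x => x - x⁻¹ - 2 * Real.log x with hf
  have hsub : Set.Ici (1:ℝ) ⊆ ({0}ᶜ : Set ℝ) := by
    intro x hx hx0
    simp only [Set.mem_singleton_iff] at hx0
    simp only [Set.mem_Ici] at hx
    rw [hx0] at hx; linarith
  have hmono : MonotoneOn f (Set.Ici 1) := by
    have hder : ∀ x ∈ Set.Ioi (1:ℝ), HasDerivAt f (1 - (-(x^2)⁻¹) - 2 * x⁻¹) x := by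
      intro x hx
      have hx1 : (1:ℝ) < x := hx
      have hx0 : x ≠ 0 := by positivity
      exact ((hasDerivAt_id' x).sub (hasDerivAt_inv hx0)).sub
        ((Real.hasDerivAt_log hx0).const_mul 2)
    apply monotoneOn_of_deriv_nonneg (convex_Ici 1)
    · exact (continuousOn_id.sub (continuousOn_inv₀.mono hsub)).sub
        (continuousOn_const.mul (Real.continuousOn_log.mono hsub))
    · rw [interior_Ici]
      intro x hx
      exact (hder x hx).differentiableAt.differentiableWithinAt
    · rw [interior_Ici]
      intro x hx
      rw [(hder x hx).deriv]
      have hx0 : (0:ℝ) < x := lt_trans one_pos hx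
      have : 1 - (-(x^2)⁻¹) - 2 * x⁻¹ = (1 - x⁻¹)^2 := by field_simp; ring
      rw [this]; positivity
  have h1 : f 1 ≤ f t := hmono (by simp) ht ht
  simp only [hf, Real.log_one, inv_one] at h1
  have ht' : 1 / t = t⁻¹ := one_div t
  rw [ht']
  linarith

/-- pointwise strict inequality for the Chernoff divergence. -/
lemma chernoff_lt {l0 l1 s : ℝ} (h0 : 0 < l0) (h01 : l0 < l1) (hs : 1 / 2 < s) :
    chernoffPoisson s l0 l1 < chernoffPoisson (1/2) l0 l1 := by
  have h1 : 0 < l1 := h0.trans h01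
  set c : ℝ := Real.log l0 - Real.log l1 with hc
  have hcneg : c < 0 := sub_neg.mpr (Real.log_lt_log h0 h01)
  have hrw : ∀ u : ℝ, l0 ^ u * l1 ^ (1 - u) = l1 * Real.exp (u * c) := by
    intro u
    have h : l1 * Real.exp (u * c) = Real.exp (Real.log l1 + u * c) := by
      rw [Real.exp_add, Real.exp_log h1]
    rw [h, Real.rpow_def_of_pos h0, Real.rpow_def_of_pos h1, ← Real.exp_add]
    congr 1
    rw [hc]; ring
  set a : ℝ := Real.sqrt l0 with hA
  set b : ℝ := Real.sqrt l1 with hB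
  have ha0 : 0 < a := Real.sqrt_pos.mpr h0
  have hb0 : 0 < b := Real.sqrt_pos.mpr h1
  have ha : a ^ 2 = l0 := Real.sq_sqrt h0.le
  have hb : b ^ 2 = l1 := Real.sq_sqrt h1.le
  have hab : a ≤ b := Real.sqrt_le_sqrt h01.le
  have hloga : Real.log l0 = 2 * Real.log a := by
    rw [← ha, Real.log_pow]; norm_num
  have hlogb : Real.log l1 = 2 * Real.log b := by
    rw [← hb, Real.log_pow]; norm_num
  have hexphalf : Real.exp ((1/2) * c) = a / b := by
    have h : (1/2) * c = Real.log (a / b) := by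
      rw [hc, hloga, hlogb, Real.log_div ha0.ne' hb0.ne']; ring
    rw [h, Real.exp_log (div_pos ha0 hb0)]
  have hlogA : 2 * Real.log (b / a) ≤ b / a - a / b := by
    have h := two_log_le_aux ((one_le_div ha0).mpr hab)
    rwa [one_div_div] at h
  have hsqrt : l1 * Real.exp ((1/2) * c) * (-c) ≤ l1 - l0 := by
    rw [hexphalf, ← ha, ← hb, hc, hloga, hlogb]
    have hlogd : Real.log (b / a) = Real.log b - Real.log a := Real.log_div hb0.ne' ha0.ne'
    have h2 : a * b * (2 * Real.log (b/a)) ≤ a * b * (b/a - a/b) :=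
      mul_le_mul_of_nonneg_left hlogA (by positivity)
    have hid1 : a * b * (b/a - a/b) = b^2 - a^2 := by field_simp
    have hid2 : b^2 * (a/b) * (-(2 * Real.log a - 2 * Real.log b))
        = a * b * (2 * Real.log (b/a)) := by
      rw [hlogd]; field_simp; ring
    rw [hid2]; rw [hid1] at h2; linarith
  have hexp1 : 1 - (s - 1/2) * (-c) < Real.exp (-((s - 1/2) * (-c))) := by
    have h := Real.add_one_lt_exp (x := -((s - 1/2) * (-c)))
      (by intro h; rw [neg_eq_zero] at h; nlinarith)
    linarith
  have hsc : Real.exp (s * c) = Real.exp ((1/2) * c) * Real.exp (-((s - 1/2) * (-c))) := by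
    rw [← Real.exp_add]; congr 1; ring
  have fact1 : l1 * Real.exp ((1/2) * c) * (1 - (s - 1/2) * (-c)) < l1 * Real.exp (s * c) := by
    rw [hsc, ← mul_assoc]
    exact mul_lt_mul_of_pos_left hexp1 (by positivity)
  have fact2 : (s - 1/2) * (l1 * Real.exp ((1/2) * c) * (-c)) ≤ (s - 1/2) * (l1 - l0) :=
    mul_le_mul_of_nonneg_left hsqrt (by linarith)
  simp only [chernoffPoisson]
  rw [hrw s, hrw (1/2)]
  nlinarith [fact1, fact2]

/-- chernoff at equal rates vanishes. -/
lemma chernoff_self {l s : ℝ} (hl : 0 < l) : chernoffPoisson s l l = 0 := by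
  simp only [chernoffPoisson]
  rw [← Real.rpow_add hl]
  have h : s + (1 - s) = 1 := by ring
  rw [h, Real.rpow_one]
  ring

/-- For a dark-count rate `r > 0` and a probability measure `Q` on `[0,1]` that is not the
point mass at `0`, the expected BPSK Chernoff exponent at any `s ∈ (1/2,1]` is strictly
smaller than at `s = 1/2`; consequently any maximizer over `[0,1]` of
`s ↦ ∫ C_s((1-v)²+r,(1+v)²+r) dQ(v)` lies in `(0,1/2]`. -/
theorem maximizer_in_left_half (r : ℝ) (hr : 0 < r) (Q : Measure ℝ)
    [IsProbabilityMeasure Q] (hQsupp : Q (Set.Icc (0 : ℝ) 1)ᶜ = 0)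
    (hQ0 : Q {(0 : ℝ)} < 1) :
    (∀ s ∈ Set.Ioc (1 / 2 : ℝ) 1,
      (∫ v, chernoffPoisson s ((1 - v) ^ 2 + r) ((1 + v) ^ 2 + r) ∂Q) <
        ∫ v, chernoffPoisson (1 / 2) ((1 - v) ^ 2 + r) ((1 + v) ^ 2 + r) ∂Q) ∧
    ∀ sStar ∈ Set.Icc (0 : ℝ) 1,
      (∀ s ∈ Set.Icc (0 : ℝ) 1,
        (∫ v, chernoffPoisson s ((1 - v) ^ 2 + r) ((1 + v) ^ 2 + r) ∂Q) ≤
          ∫ v, chernoffPoisson sStar ((1 - v) ^ 2 + r) ((1 + v) ^ 2 + r) ∂Q) →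
      sStar ∈ Set.Ioc (0 : ℝ) (1 / 2) := by
  have hmem : ∀ᵐ v ∂Q, v ∈ Set.Icc (0:ℝ) 1 := by
    rw [MeasureTheory.ae_iff]
    convert hQsupp using 2
    rfl
  have hQres : Q.restrict (Set.Icc (0:ℝ) 1) = Q :=
    Measure.restrict_eq_self_of_ae_mem hmem
  have hpos0 : ∀ v : ℝ, (0:ℝ) < (1 - v) ^ 2 + r := fun v => by positivity
  have hpos1 : ∀ v : ℝ, (0:ℝ) < (1 + v) ^ 2 + r := fun v => by positivity
  -- continuity and integrability
  have hcont : ∀ s : ℝ,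
      Continuous fun v : ℝ => chernoffPoisson s ((1 - v) ^ 2 + r) ((1 + v) ^ 2 + r) := by
    intro s
    have h0 : Continuous fun v : ℝ => (1 - v) ^ 2 + r := by continuity
    have h1 : Continuous fun v : ℝ => (1 + v) ^ 2 + r := by continuity
    simp only [chernoffPoisson]
    exact ((continuous_const.mul h0).add (continuous_const.mul h1)).sub
      ((h0.rpow_const fun v => Or.inl (hpos0 v).ne').mul
        (h1.rpow_const fun v => Or.inl (hpos1 v).ne'))
  have hint : ∀ s : ℝ,
      Integrable (fun v : ℝ => chernoffPoisson s ((1 - v) ^ 2 + r) ((1 + v) ^ 2 + r)) Q := by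
    intro s
    rw [← hQres]
    exact (hcont s).continuousOn.integrableOn_compact isCompact_Icc
  -- the pointwise inequality and first conclusion
  have hmain : ∀ s : ℝ, 1/2 < s →
      (∫ v, chernoffPoisson s ((1 - v) ^ 2 + r) ((1 + v) ^ 2 + r) ∂Q) <
        ∫ v, chernoffPoisson (1/2) ((1 - v) ^ 2 + r) ((1 + v) ^ 2 + r) ∂Q := by
    intro s hs
    set g : ℝ → ℝ := fun v => chernoffPoisson (1/2) ((1 - v) ^ 2 + r) ((1 + v) ^ 2 + r)
      - chernoffPoisson s ((1 - v) ^ 2 + r) ((1 + v) ^ 2 + r) with hg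
    have hglt : ∀ v : ℝ, 0 < v → 0 < g v := by
      intro v hv
      have hlt : (1 - v) ^ 2 + r < (1 + v) ^ 2 + r := by nlinarith
      exact sub_pos.mpr (chernoff_lt (hpos0 v) hlt hs)
    have hge : ∀ v ∈ Set.Icc (0:ℝ) 1, 0 ≤ g v := by
      intro v hv
      rcases eq_or_lt_of_le hv.1 with h | h
      · have hv0 : v = 0 := h.symm
        simp only [hg, hv0]
        norm_num
        rw [chernoff_self (by positivity), chernoff_self (by positivity)]
      · exact (hglt v h).le
    have hgae : 0 ≤ᵐ[Q] g := by
      filter_upwards [hmem] with v hv using hge v hv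
    have hgint : Integrable g Q := (hint (1/2)).sub (hint s)
    have hsupp : 0 < Q (Function.support g) := by
      have hsub : Set.Ioc (0:ℝ) 1 ⊆ Function.support g := by
        intro v hv
        exact (hglt v hv.1).ne'
      have hiocpos : 0 < Q (Set.Ioc (0:ℝ) 1) := by
        by_contra hcon
        push_neg at hcon
        have hioc0 : Q (Set.Ioc (0:ℝ) 1) = 0 := le_antisymm hcon zero_le
        have hicc : Set.Icc (0:ℝ) 1 ⊆ {(0:ℝ)} ∪ Set.Ioc (0:ℝ) 1 := by
          intro v hv
          rcases eq_or_lt_of_le hv.1 with h | h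
          · exact Or.inl (by simp [← h])
          · exact Or.inr ⟨h, hv.2⟩
        have h1 : Q (Set.Icc (0:ℝ) 1) = 1 := by
          have := prob_compl_eq_zero_iff (μ := Q) (measurableSet_Icc (a := (0:ℝ)) (b := 1))
          exact (this.mp hQsupp)
        have h2 : Q (Set.Icc (0:ℝ) 1) ≤ Q {(0:ℝ)} + Q (Set.Ioc (0:ℝ) 1) :=
          le_trans (measure_mono hicc) (measure_union_le _ _)
        rw [h1, hioc0, add_zero] at h2
        exact absurd h2 (not_le.mpr hQ0)
      exact lt_of_lt_of_le hiocpos (measure_mono hsub)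
    have hpos : 0 < ∫ v, g v ∂Q :=
      (integral_pos_iff_support_of_nonneg_ae hgae hgint).mpr hsupp
    have heq : ∫ v, g v ∂Q =
        (∫ v, chernoffPoisson (1/2) ((1 - v) ^ 2 + r) ((1 + v) ^ 2 + r) ∂Q)
        - ∫ v, chernoffPoisson s ((1 - v) ^ 2 + r) ((1 + v) ^ 2 + r) ∂Q :=
      integral_sub (hint (1/2)) (hint s)
    rw [heq] at hpos
    linarith
  constructor
  · intro s hs
    exact hmain s hs.1
  · intro sStar hsStar hmax
    constructor
    · -- sStar ≠ 0
      rcases eq_or_lt_of_le hsStar.1 with h | h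
      · exfalso
        have h0 : (∫ v, chernoffPoisson 1 ((1 - v) ^ 2 + r) ((1 + v) ^ 2 + r) ∂Q) <
            ∫ v, chernoffPoisson (1/2) ((1 - v) ^ 2 + r) ((1 + v) ^ 2 + r) ∂Q :=
          hmain 1 (by norm_num)
        have hzero1 : (∫ v, chernoffPoisson 1 ((1 - v) ^ 2 + r) ((1 + v) ^ 2 + r) ∂Q) = 0 := by
          have : ∀ v : ℝ, chernoffPoisson 1 ((1 - v) ^ 2 + r) ((1 + v) ^ 2 + r) = 0 := by
            intro v
            simp only [chernoffPoisson]
            rw [Real.rpow_one]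
            norm_num
          simp [this]
        have hzero0 : (∫ v, chernoffPoisson 0 ((1 - v) ^ 2 + r) ((1 + v) ^ 2 + r) ∂Q) = 0 := by
          have : ∀ v : ℝ, chernoffPoisson 0 ((1 - v) ^ 2 + r) ((1 + v) ^ 2 + r) = 0 := by
            intro v
            simp only [chernoffPoisson]
            rw [Real.rpow_zero]
            norm_num [Real.rpow_one]
          simp [this]
        have hle := hmax (1/2) (by norm_num)
        rw [← h, hzero0] at hle
        rw [hzero1] at h0
        linarith
      · exact h
    · -- sStar ≤ 1/2
      by_contra hcon
      push_neg at hcon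
      have h1 := hmain sStar hcon
      have h2 := hmax (1/2) (by norm_num)
      linarith
end
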